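/- Let d ≥ 1, let G_1,…,G_d̄ be a partition of {1,…,d} into nonempty disjoint groups, let α ∈ ℝ^d̄ have strictly positive entries, and let p, s ∈ [1,∞]. Let e be a real random variable and X a random vector in ℝ^d, independent of each other, both with finite second moments, and fix β* ∈ ℝ^d. Then inf { E[ ‖eζ − (ζᵀX)β*‖_{α-(p,s)}² ] : ζ ∈ ℝ^d, ‖ζ‖_{α-(p,s)} = 1 } ≥ E[e²] − (E[|e|])². -/

import Mathlib

open scoped ENNReal BigOperators
open MeasureTheory Filter

/-- The l_p norm (p ∈ [1,∞], with sup modification at p = ∞) of a finite real vector. -/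
noncomputable def lpn (p : ℝ≥0∞) {ι : Type} [Fintype ι] (x : ι → ℝ) : ℝ :=
  ‖(WithLp.equiv p (ι → ℝ)).symm x‖

/-- The α-(p,s) groupwise norm: ‖x‖ = ( Σ_i α_i^s ‖x(G_i)‖_p^s )^{1/s}. -/
noncomputable def gnorm {d dbar : ℕ} (G : Fin dbar → Finset (Fin d)) (α : Fin dbar → ℝ)
    (p s : ℝ≥0∞) (x : Fin d → ℝ) : ℝ :=
  lpn s (fun i => α i * lpn p (fun j : {k // k ∈ G i} => x j.1))

/-- G_1, …, G_d̄ form a partition of {1,…,d} into nonempty disjoint groups. -/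
def IsPartition {d dbar : ℕ} (G : Fin dbar → Finset (Fin d)) : Prop :=
  (∀ i, (G i).Nonempty) ∧ (∀ i j, i ≠ j → Disjoint (G i) (G j)) ∧ (∀ k, ∃ i, k ∈ G i)

noncomputable def Fmap {d dbar : ℕ} (G : Fin dbar → Finset (Fin d)) (α : Fin dbar → ℝ)
    (p s : ℝ≥0∞) :
    (Fin d → ℝ) →ₗ[ℝ] PiLp s (fun i => PiLp p (fun _ : {k // k ∈ G i} => ℝ)) :=
  (WithLp.linearEquiv s ℝ _).symm.toLinearMap ∘ₗ
    LinearMap.pi (fun i => (WithLp.linearEquiv p ℝ _).symm.toLinearMap ∘ₗ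
      (α i • LinearMap.pi (fun j : {k // k ∈ G i} => LinearMap.proj j.1)))

lemma lpn_of_norms {p : ℝ≥0∞} (hp : 1 ≤ p) {ι : Type} [Fintype ι]
    {β : ι → Type*} [∀ i, SeminormedAddCommGroup (β i)] (f : PiLp p β) :
    lpn p (fun i => ‖f i‖) = ‖f‖ := by
  haveI : Fact (1 ≤ p) := ⟨hp⟩
  rcases eq_or_ne p ∞ with h | h
  · subst h
    rw [lpn, PiLp.norm_eq_ciSup, PiLp.norm_eq_ciSup]
    simp [Real.norm_eq_abs, abs_of_nonneg (norm_nonneg _)]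
  · have hpt : 0 < p.toReal := by
      apply ENNReal.toReal_pos _ h
      intro h0; rw [h0] at hp; simp at hp
    rw [lpn, PiLp.norm_eq_sum hpt, PiLp.norm_eq_sum hpt]
    congr 1
    apply Finset.sum_congr rfl
    intro i _
    simp [PiLp.toLp_apply, Real.norm_eq_abs, abs_of_nonneg (norm_nonneg _)]

lemma gnorm_eq_norm {d dbar : ℕ} (G : Fin dbar → Finset (Fin d)) {α : Fin dbar → ℝ}
    (hα : ∀ i, 0 ≤ α i) {p s : ℝ≥0∞} (hp : 1 ≤ p) (hs : 1 ≤ s) (x : Fin d → ℝ) :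
    gnorm G α p s x = ‖Fmap G α p s x‖ := by
  haveI : Fact (1 ≤ p) := ⟨hp⟩
  haveI : Fact (1 ≤ s) := ⟨hs⟩
  rw [← lpn_of_norms hs (Fmap G α p s x)]
  unfold gnorm
  congr 1
  funext i
  rw [show (Fmap G α p s x) i
    = α i • (WithLp.equiv p ({k // k ∈ G i} → ℝ)).symm (fun j : {k // k ∈ G i} => x j.1) from rfl]
  rw [norm_smul]
  simp [lpn, Real.norm_eq_abs, abs_of_nonneg (hα i)]

section props
variable {d dbar : ℕ} {G : Fin dbar → Finset (Fin d)} {α : Fin dbar → ℝ}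
  {p s : ℝ≥0∞} (hα : ∀ i, 0 ≤ α i) (hp : 1 ≤ p) (hs : 1 ≤ s)
include hα hp hs

lemma gnorm_nonneg (x : Fin d → ℝ) : 0 ≤ gnorm G α p s x := by
  haveI : Fact (1 ≤ p) := ⟨hp⟩; haveI : Fact (1 ≤ s) := ⟨hs⟩
  rw [gnorm_eq_norm G hα hp hs]; exact norm_nonneg _

lemma gnorm_add_le (x y : Fin d → ℝ) :
    gnorm G α p s (x + y) ≤ gnorm G α p s x + gnorm G α p s y := by
  haveI : Fact (1 ≤ p) := ⟨hp⟩; haveI : Fact (1 ≤ s) := ⟨hs⟩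
  simp only [gnorm_eq_norm G hα hp hs, map_add]
  exact norm_add_le _ _

lemma gnorm_smul (c : ℝ) (x : Fin d → ℝ) :
    gnorm G α p s (c • x) = |c| * gnorm G α p s x := by
  haveI : Fact (1 ≤ p) := ⟨hp⟩; haveI : Fact (1 ≤ s) := ⟨hs⟩
  simp only [gnorm_eq_norm G hα hp hs, LinearMap.map_smul, norm_smul, Real.norm_eq_abs]

lemma gnorm_continuous : Continuous (gnorm G α p s) := by
  haveI : Fact (1 ≤ p) := ⟨hp⟩; haveI : Fact (1 ≤ s) := ⟨hs⟩
  have : gnorm G α p s = fun x => ‖Fmap G α p s x‖ := funext (gnorm_eq_norm G hα hp hs)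
  rw [this]
  exact ((Fmap G α p s).continuous_of_finiteDimensional).norm

lemma gnorm_pos (hG : IsPartition G) (hα' : ∀ i, 0 < α i) {x : Fin d → ℝ} (hx : x ≠ 0) :
    0 < gnorm G α p s x := by
  haveI : Fact (1 ≤ p) := ⟨hp⟩; haveI : Fact (1 ≤ s) := ⟨hs⟩
  rw [gnorm_eq_norm G hα hp hs]
  rw [norm_pos_iff]
  intro h
  apply hx
  funext k
  obtain ⟨i, hik⟩ := hG.2.2 k
  have := congrArg (fun y => y i) h
  have h2 : (α i • fun j : {k // k ∈ G i} => x j.1) = (0 : {k // k ∈ G i} → ℝ) := by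
    exact congrArg (WithLp.equiv p _) this
  have := congrFun h2 ⟨k, hik⟩
  simp only [Pi.smul_apply, smul_eq_mul, Pi.zero_apply] at this
  rcases mul_eq_zero.mp this with h' | h'
  · exact absurd h' (ne_of_gt (hα' i))
  · exact h'

end props

set_option maxHeartbeats 1000000 in
theorem statement14 {d dbar : ℕ} (hd : 1 ≤ d)
    (G : Fin dbar → Finset (Fin d)) (hG : IsPartition G)
    (α : Fin dbar → ℝ) (hα : ∀ i, 0 < α i)
    (p s : ℝ≥0∞) (hp : 1 ≤ p) (hs : 1 ≤ s)
    {Ω : Type} [MeasurableSpace Ω] (P : Measure Ω) [IsProbabilityMeasure P]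
    (e : Ω → ℝ) (X : Ω → Fin d → ℝ)
    (hem : Measurable e) (hXm : Measurable X)
    (hindep : ProbabilityTheory.IndepFun X e P)
    (he2 : Integrable (fun ω => e ω ^ 2) P)
    (hX2 : ∀ k l, Integrable (fun ω => X ω k * X ω l) P)
    (βstar : Fin d → ℝ) :
    (∫ ω, e ω ^ 2 ∂P) - (∫ ω, |e ω| ∂P) ^ 2 ≤
      sInf {v : ℝ | ∃ ζ : Fin d → ℝ, gnorm G α p s ζ = 1 ∧
        v = ∫ ω, (gnorm G α p s (fun k => e ω * ζ k - (∑ l, ζ l * X ω l) * βstar k)) ^ 2 ∂P} := by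
  haveI : Fact (1 ≤ p) := ⟨hp⟩
  haveI : Fact (1 ≤ s) := ⟨hs⟩
  have hα0 : ∀ i, 0 ≤ α i := fun i => (hα i).le
  set B := gnorm G α p s βstar with hBdef
  have hB0 : 0 ≤ B := gnorm_nonneg hα0 hp hs βstar
  apply le_csInf
  · -- nonempty
    set k₀ : Fin d := ⟨0, hd⟩
    set ζ0 : Fin d → ℝ := Pi.single k₀ 1 with hζ0def
    have hζ0 : ζ0 ≠ 0 := by
      intro h
      have := congrFun h k₀
      simp [hζ0def] at this
    have hN : 0 < gnorm G α p s ζ0 := gnorm_pos hα0 hp hs hG hα hζ0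
    refine ⟨_, (gnorm G α p s ζ0)⁻¹ • ζ0, ?_, rfl⟩
    rw [gnorm_smul hα0 hp hs, abs_of_pos (inv_pos.2 hN), inv_mul_cancel₀ (ne_of_gt hN)]
  · rintro v ⟨ζ, hζ, rfl⟩
    set c : Ω → ℝ := fun ω => ∑ l, ζ l * X ω l with hcdef
    have hcm : Measurable c := by
      exact Finset.measurable_sum (f := fun l (ω : Ω) => ζ l * X ω l) Finset.univ
        (fun l _ => ((measurable_pi_apply l).comp hXm).const_mul (ζ l))
    have hce : ProbabilityTheory.IndepFun c e P := by
      have hφ : Measurable (fun x : Fin d → ℝ => ∑ l, ζ l * x l) := by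
        exact Finset.measurable_sum (f := fun l (x : Fin d → ℝ) => ζ l * x l) Finset.univ
          (fun l _ => (measurable_pi_apply l : Measurable fun x : Fin d → ℝ => x l).const_mul (ζ l))
      exact hindep.comp hφ measurable_id
    have heint : Integrable e P :=
      ((memLp_two_iff_integrable_sq hem.aestronglyMeasurable).2 he2).integrable one_le_two
    have memX : ∀ l, MemLp (fun ω => X ω l) 2 P := by
      intro l
      apply (memLp_two_iff_integrable_sq
        ((measurable_pi_apply l).comp hXm).aestronglyMeasurable).2
      simpa [sq] using hX2 l l
    have memc : MemLp c 2 P := by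
      have h := memLp_finset_sum' (μ := P) Finset.univ
        (f := fun l (ω : Ω) => ζ l * X ω l)
        (fun l _ => (memX l).const_mul (ζ l))
      have heq : c = ∑ l : Fin d, (fun ω => ζ l * X ω l) := by
        funext ω; simp [hcdef, Finset.sum_apply]
      rw [heq]; exact h
    have hcint : Integrable c P := memc.integrable one_le_two
    have hcabs : Integrable (fun ω => |c ω|) P := hcint.abs
    have heabs : Integrable (fun ω => |e ω|) P := heint.abs
    have hc2 : Integrable (fun ω => c ω ^ 2) P :=
      (memLp_two_iff_integrable_sq hcm.aestronglyMeasurable).1 memc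
    have hec : Integrable (fun ω => e ω * c ω) P := by
      have h := (hce.symm).integrable_mul heint hcint
      exact h
    -- pointwise inequality
    have hpt : ∀ ω, (|e ω| - |c ω| * B)^2 ≤
        (gnorm G α p s (fun k => e ω * ζ k - c ω * βstar k))^2 := by
      intro ω
      set vω : Fin d → ℝ := fun k => e ω * ζ k - c ω * βstar k with hvω
      have hgv0 : 0 ≤ gnorm G α p s vω := gnorm_nonneg hα0 hp hs vω
      have h1 : gnorm G α p s (fun k => e ω * ζ k) = |e ω| := by
        have : (fun k => e ω * ζ k) = e ω • ζ := rfl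
        rw [this, gnorm_smul hα0 hp hs, hζ, mul_one]
      have h2 : gnorm G α p s (fun k => c ω * βstar k) = |c ω| * B := by
        have : (fun k => c ω * βstar k) = c ω • βstar := rfl
        rw [this, gnorm_smul hα0 hp hs, hBdef]
      have tri1 : |e ω| ≤ gnorm G α p s vω + |c ω| * B := by
        rw [← h1, ← h2]
        have heq : (fun k => e ω * ζ k) = vω + (fun k => c ω * βstar k) := by
          funext k; simp [hvω]
        rw [heq]
        exact gnorm_add_le hα0 hp hs _ _
      have tri2 : |c ω| * B ≤ |e ω| + gnorm G α p s vω := by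
        rw [← h1, ← h2]
        have heq : (fun k => c ω * βstar k) = (fun k => e ω * ζ k) + (-1 : ℝ) • vω := by
          funext k; simp only [hvω, Pi.add_apply, Pi.smul_apply, smul_eq_mul]; ring
        rw [heq]
        calc gnorm G α p s _ ≤ gnorm G α p s (fun k => e ω * ζ k)
              + gnorm G α p s ((-1 : ℝ) • vω) := gnorm_add_le hα0 hp hs _ _
          _ = gnorm G α p s (fun k => e ω * ζ k) + gnorm G α p s vω := by
              rw [gnorm_smul hα0 hp hs]; norm_num
      exact sq_le_sq' (by linarith) (by linarith)
    -- measurability of the integrand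
    have hvm : Measurable (fun ω => (fun k => e ω * ζ k - c ω * βstar k)) := by
      apply measurable_pi_lambda
      intro k
      exact (hem.mul_const (ζ k)).sub (hcm.mul_const (βstar k))
    have hgm : Measurable (fun ω => (gnorm G α p s (fun k => e ω * ζ k - c ω * βstar k))^2) := by
      have h1 : Measurable (fun ω => gnorm G α p s (fun k => e ω * ζ k - c ω * βstar k)) :=
        (gnorm_continuous hα0 hp hs).measurable.comp hvm
      exact h1.pow_const 2
    -- integrability of products of coordinates
    have hvkl : ∀ k l, Integrable (fun ω =>
        (e ω * ζ k - c ω * βstar k) * (e ω * ζ l - c ω * βstar l)) P := by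
      intro k l
      have heq : (fun ω => (e ω * ζ k - c ω * βstar k) * (e ω * ζ l - c ω * βstar l))
          = fun ω => (ζ k * ζ l) * e ω ^ 2 - (ζ k * βstar l + ζ l * βstar k) * (e ω * c ω)
              + (βstar k * βstar l) * c ω ^ 2 := by
        funext ω; ring
      rw [heq]
      exact ((he2.const_mul _).sub (hec.const_mul _)).add (hc2.const_mul _)
    -- the bounding function
    set C : Fin d → ℝ := fun k => gnorm G α p s (Pi.single k 1) with hCdef
    have hsumbd : ∀ x : Fin d → ℝ, gnorm G α p s x ≤ ∑ k, |x k| * C k := by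
      intro x
      have hx : x = ∑ k, x k • (Pi.single k 1 : Fin d → ℝ) := by
        funext j
        simp [Finset.sum_apply, Pi.single_apply]
      calc gnorm G α p s x = ‖Fmap G α p s x‖ := gnorm_eq_norm G hα0 hp hs x
        _ = ‖∑ k, Fmap G α p s (x k • (Pi.single k 1 : Fin d → ℝ))‖ := by
            rw [← map_sum]; congr 1; exact congrArg _ hx
        _ ≤ ∑ k, ‖Fmap G α p s (x k • (Pi.single k 1 : Fin d → ℝ))‖ := norm_sum_le _ _
        _ = ∑ k, |x k| * C k := by
            apply Finset.sum_congr rfl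
            intro k _
            rw [LinearMap.map_smul, norm_smul, Real.norm_eq_abs,
              ← gnorm_eq_norm G hα0 hp hs]
    have hW : Integrable (fun ω =>
        (∑ k, |e ω * ζ k - c ω * βstar k| * C k)^2) P := by
      have heq : (fun ω => (∑ k, |e ω * ζ k - c ω * βstar k| * C k)^2)
          = fun ω => ∑ k, ∑ l, (C k * C l) *
              |(e ω * ζ k - c ω * βstar k) * (e ω * ζ l - c ω * βstar l)| := by
        funext ω
        rw [sq, Finset.sum_mul_sum]
        apply Finset.sum_congr rfl; intro k _
        apply Finset.sum_congr rfl; intro l _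
        rw [abs_mul]; ring
      rw [heq]
      apply integrable_finset_sum
      intro k _
      apply integrable_finset_sum
      intro l _
      exact ((hvkl k l).abs).const_mul _
    have hIg : Integrable (fun ω =>
        (gnorm G α p s (fun k => e ω * ζ k - c ω * βstar k))^2) P := by
      apply hW.mono' hgm.aestronglyMeasurable
      filter_upwards with ω
      rw [Real.norm_eq_abs, abs_of_nonneg (by positivity)]
      have h0 : 0 ≤ gnorm G α p s (fun k => e ω * ζ k - c ω * βstar k) :=
        gnorm_nonneg hα0 hp hs _
      have hb := hsumbd (fun k => e ω * ζ k - c ω * βstar k)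
      exact pow_le_pow_left₀ h0 hb 2
    have hI2 : Integrable (fun ω => (|e ω| - |c ω| * B)^2) P := by
      have heq : (fun ω => (|e ω| - |c ω| * B)^2)
          = fun ω => e ω ^ 2 - (2*B) * |e ω * c ω| + B^2 * c ω ^ 2 := by
        funext ω
        rw [sub_sq, sq_abs, abs_mul, mul_pow, sq_abs]
        ring
      rw [heq]
      exact (he2.sub ((hec.abs).const_mul _)).add (hc2.const_mul _)
    have hmono : ∫ ω, (|e ω| - |c ω| * B)^2 ∂P ≤
        ∫ ω, (gnorm G α p s (fun k => e ω * ζ k - c ω * βstar k))^2 ∂P :=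
      integral_mono hI2 hIg hpt
    -- compute the lower integral
    have hsplit : ∫ ω, (|e ω| - |c ω| * B)^2 ∂P
        = (∫ ω, e ω ^ 2 ∂P) - (2*B) * (∫ ω, |e ω * c ω| ∂P) + B^2 * (∫ ω, c ω ^ 2 ∂P) := by
      have heq : (fun ω => (|e ω| - |c ω| * B)^2)
          = fun ω => e ω ^ 2 - (2*B) * |e ω * c ω| + B^2 * c ω ^ 2 := by
        funext ω
        rw [sub_sq, sq_abs, abs_mul, mul_pow, sq_abs]
        ring
      rw [heq]
      have i1 : Integrable (fun ω => e ω ^ 2 - (2*B) * |e ω * c ω|) P :=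
        he2.sub ((hec.abs).const_mul (2*B))
      have i2 : Integrable (fun ω => B^2 * c ω ^ 2) P := hc2.const_mul _
      rw [integral_add i1 i2, integral_sub he2 ((hec.abs).const_mul (2*B)),
        integral_const_mul, integral_const_mul]
    have hprod : ∫ ω, |e ω * c ω| ∂P = (∫ ω, |c ω| ∂P) * (∫ ω, |e ω| ∂P) := by
      have hca : ProbabilityTheory.IndepFun (fun ω => |c ω|) (fun ω => |e ω|) P :=
        hce.comp measurable_abs measurable_abs
      have h := hca.integral_mul_eq_mul_integral (hcm.abs).aestronglyMeasurable (hem.abs).aestronglyMeasurable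
      have heq : (fun ω => |e ω * c ω|) = (fun ω => |c ω|) * (fun ω => |e ω|) := by
        funext ω; rw [Pi.mul_apply, abs_mul]; ring
      rw [heq]
      exact h
    have hvarc : (∫ ω, |c ω| ∂P)^2 ≤ ∫ ω, c ω ^ 2 ∂P := by
      have hmc : MemLp (fun ω => |c ω|) 2 P := by
        have := memc.abs
        exact this
      have hv := ProbabilityTheory.variance_eq_sub hmc
      have hnn := ProbabilityTheory.variance_nonneg (fun ω => |c ω|) P
      rw [hv] at hnn
      have heq2 : ∫ ω, ((fun ω => |c ω|)^2) ω ∂P = ∫ ω, c ω ^ 2 ∂P := by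
        apply integral_congr_ae
        filter_upwards with ω
        simp [sq_abs]
      simp only [Pi.pow_apply] at hnn heq2 ⊢
      nlinarith [hnn, heq2]
    -- finish
    have hE1 : 0 ≤ ∫ ω, |e ω| ∂P := integral_nonneg (fun ω => abs_nonneg _)
    have hA : 0 ≤ ∫ ω, |c ω| ∂P := integral_nonneg (fun ω => abs_nonneg _)
    rw [hsplit, hprod] at hmono
    have hfinal : (∫ ω, e ω ^ 2 ∂P) - (∫ ω, |e ω| ∂P)^2 ≤
        (∫ ω, e ω ^ 2 ∂P) - 2*B * ((∫ ω, |c ω| ∂P) * (∫ ω, |e ω| ∂P))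
          + B^2 * (∫ ω, c ω ^ 2 ∂P) := by
      nlinarith [sq_nonneg ((∫ ω, |e ω| ∂P) - B * (∫ ω, |c ω| ∂P)), hvarc, sq_nonneg B]
    calc (∫ ω, e ω ^ 2 ∂P) - (∫ ω, |e ω| ∂P)^2
        ≤ _ := hfinal
      _ ≤ ∫ ω, (gnorm G α p s (fun k => e ω * ζ k - c ω * βstar k))^2 ∂P := hmono
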